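/- Conditional uniformity of the survival transform given an interval: Let T be a random variable with values in (0, infinity) whose survival function S is continuous, and let 0 <= l < r <= infinity with S(l) > S(r). Then, conditionally on the event {l < T <= r}, the random variable S(T) is uniformly distributed on the interval [S(r), S(l)). -/

import Mathlib

open MeasureTheory ProbabilityTheory Set Function Filter Topology

section Aux

variable {Ω : Type*} [MeasurableSpace Ω] (P : Measure Ω) [IsProbabilityMeasure P]
    (T : Ω → ℝ) (hT : Measurable T)
    (S : ℝ → ℝ) (hS : ∀ t, S t = (P {ω | t < T ω}).toReal)

include hS in
lemma surv_anti : Antitone S := by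
  intro a b hab
  rw [hS, hS]
  exact ENNReal.toReal_mono (measure_ne_top _ _)
    (measure_mono fun ω h => lt_of_le_of_lt hab h)

include hS in
lemma surv_ofReal : ∀ t, P {ω | t < T ω} = ENNReal.ofReal (S t) := by
  intro t
  rw [hS, ENNReal.ofReal_toReal (measure_ne_top _ _)]

include hT hS in
lemma surv_Ici (hScont : Continuous S) (t : ℝ) :
    P {ω | t ≤ T ω} = P {ω | t < T ω} := by
  set s : ℕ → Set Ω := fun n => {ω | t - 1/(n+1) < T ω} with hs
  have hseq : {ω | t ≤ T ω} = ⋂ n : ℕ, s n := by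
    ext ω
    simp only [hs, mem_iInter, mem_setOf_eq]
    constructor
    · intro h n
      have hp : (0:ℝ) < 1/((n:ℝ)+1) := by positivity
      linarith
    · intro h
      by_contra hc
      push_neg at hc
      obtain ⟨n, hn⟩ := exists_nat_one_div_lt (sub_pos.mpr hc)
      have := h n
      linarith
  have hanti : Antitone s := by
    intro m n hmn ω hω
    simp only [hs, mem_setOf_eq] at hω ⊢
    have h1 : 1/((n:ℝ)+1) ≤ 1/((m:ℝ)+1) := by
      apply one_div_le_one_div_of_le (by positivity)
      exact_mod_cast add_le_add_left (Nat.cast_le.mpr hmn) 1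
    linarith
  have hmeas : ∀ n, NullMeasurableSet (s n) P :=
    fun n => (measurableSet_lt measurable_const hT).nullMeasurableSet
  have h1 : Tendsto (fun n => P (s n)) atTop (𝓝 (P {ω | t ≤ T ω})) := by
    rw [hseq]
    exact tendsto_measure_iInter_atTop hmeas hanti ⟨0, measure_ne_top _ _⟩
  have h2 : Tendsto (fun n => P (s n)) atTop (𝓝 (P {ω | t < T ω})) := by
    have hts : Tendsto (fun n : ℕ => t - 1/((n:ℝ)+1)) atTop (𝓝 t) := by
      have := tendsto_one_div_add_atTop_nhds_zero_nat (𝕜 := ℝ)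
      have := (tendsto_const_nhds (x := t) (f := atTop (α := ℕ))).sub this
      simpa using this
    have hcont : Tendsto (fun n : ℕ => ENNReal.ofReal (S (t - 1/((n:ℝ)+1)))) atTop
        (𝓝 (ENNReal.ofReal (S t))) :=
      (ENNReal.continuous_ofReal.tendsto _).comp ((hScont.tendsto t).comp hts)
    have heq : (fun n : ℕ => P (s n)) = fun n : ℕ => ENNReal.ofReal (S (t - 1/((n:ℝ)+1))) := by
      funext n
      exact surv_ofReal P T S hS _
    rw [heq, surv_ofReal P T S hS]
    exact hcont
  exact tendsto_nhds_unique h1 h2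

include hT hS in
lemma surv_exists_le (hScont : Continuous S) {x : ℝ} (hx : 0 < x)
    (hT' : ∀ ω, (0:ℝ) < T ω) : ∃ t : ℝ, S t ≤ x := by
  have hempty : ⋂ n : ℕ, {ω | (n:ℝ) < T ω} = ∅ := by
    ext ω
    simp only [mem_iInter, mem_setOf_eq, mem_empty_iff_false, iff_false, not_forall, not_lt]
    obtain ⟨n, hn⟩ := exists_nat_gt (T ω)
    exact ⟨n, hn.le⟩
  have hanti : Antitone (fun n : ℕ => {ω | (n:ℝ) < T ω}) := by
    intro m n hmn ω hω
    simp only [mem_setOf_eq] at hω ⊢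
    exact lt_of_le_of_lt (by exact_mod_cast hmn) hω
  have h1 : Tendsto (fun n : ℕ => P {ω | (n:ℝ) < T ω}) atTop (𝓝 0) := by
    have := tendsto_measure_iInter_atTop (μ := P) (s := fun n : ℕ => {ω | (n:ℝ) < T ω})
      (fun n => (measurableSet_lt measurable_const hT).nullMeasurableSet) hanti
      ⟨0, measure_ne_top _ _⟩
    rw [hempty] at this
    simpa [Function.comp_def] using this
  have : ∀ᶠ n : ℕ in atTop, P {ω | (n:ℝ) < T ω} < ENNReal.ofReal x :=
    h1.eventually_lt_const (by simpa using hx)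
  obtain ⟨n, hn⟩ := this.exists
  refine ⟨n, ?_⟩
  rw [hS]
  rw [surv_ofReal P T S hS] at hn
  have := (ENNReal.ofReal_lt_ofReal_iff hx).mp hn
  rw [hS] at this
  exact this.le

end Aux

/-- **Conditional uniformity of the survival transform given an interval.**
`T` is a random variable with values in `(0,∞)` whose survival function `S` is continuous;
`0 ≤ l < r ≤ ∞` (the possibly infinite right endpoint `r` lives in `EReal`, `Sr = P(T > r)`,
which is `0` if `r = ∞`) and `S(l) > S(r)`.  Then, conditionally on `{l < T ≤ r}`,
the random variable `S(T)` is uniformly distributed on `[S(r), S(l))`: its conditional law is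
Lebesgue measure restricted to `Ico (S r) (S l)` normalized by `(S l - S r)⁻¹`. -/
theorem conditional_uniformity_of_survival_transform
    {Ω : Type*} [MeasurableSpace Ω] (P : Measure Ω) [IsProbabilityMeasure P]
    (T : Ω → ℝ) (hT : Measurable T) (hpos : ∀ ω, 0 < T ω)
    (S : ℝ → ℝ) (hS : ∀ t, S t = (P {ω | t < T ω}).toReal) (hScont : Continuous S)
    (l : ℝ) (r : EReal) (hl : 0 ≤ l) (hlr : (l : EReal) < r)
    (Sr : ℝ) (hSr : Sr = (P {ω | r < (T ω : EReal)}).toReal)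
    (hgap : Sr < S l) :
    Measure.map (fun ω => S (T ω)) (P[|{ω | l < T ω ∧ (T ω : EReal) ≤ r}])
      = (ENNReal.ofReal (S l - Sr))⁻¹ • volume.restrict (Set.Ico Sr (S l)) := by
  have hanti : Antitone S := surv_anti P T S hS
  have hofReal : ∀ t, P {ω | t < T ω} = ENNReal.ofReal (S t) := surv_ofReal P T S hS
  have hIci : ∀ t, P {ω | t ≤ T ω} = P {ω | t < T ω} := surv_Ici P T hT S hS hScont
  have hS0 : ∀ t, 0 ≤ S t := fun t => by rw [hS]; exact ENNReal.toReal_nonneg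
  have hSr0 : 0 ≤ Sr := by rw [hSr]; exact ENNReal.toReal_nonneg
  set E : Set Ω := {ω | l < T ω ∧ (T ω : EReal) ≤ r} with hEdef
  have hmE : MeasurableSet E := by
    apply MeasurableSet.inter
    · exact measurableSet_lt measurable_const hT
    · exact hT (isClosed_le continuous_coe_real_ereal continuous_const).measurableSet
  -- `Sr ≤ S t` for real `t ≤ r`:
  have hSrle : ∀ t : ℝ, (t : EReal) ≤ r → Sr ≤ S t := by
    intro t ht
    rw [hSr, hS]
    refine ENNReal.toReal_mono (measure_ne_top _ _) (measure_mono ?_)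
    intro ω hω
    simp only [mem_setOf_eq] at hω ⊢
    exact_mod_cast lt_of_le_of_lt ht hω
  have hPr : P {ω | r < (T ω : EReal)} = ENNReal.ofReal Sr := by
    rw [hSr, ENNReal.ofReal_toReal (measure_ne_top _ _)]
  have hsubr : {ω | r < (T ω : EReal)} ⊆ {ω | l < T ω} := by
    intro ω hω
    simp only [mem_setOf_eq] at hω ⊢
    exact_mod_cast lt_trans hlr hω
  have hmr : MeasurableSet {ω | r < (T ω : EReal)} :=
    hT (isOpen_lt continuous_const continuous_coe_real_ereal).measurableSet
  have hEdiff : E = {ω | l < T ω} \ {ω | r < (T ω : EReal)} := by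
    ext ω
    simp only [hEdef, mem_setOf_eq, mem_diff, not_lt]
  have hPE : P E = ENNReal.ofReal (S l - Sr) := by
    rw [hEdiff, measure_diff hsubr hmr.nullMeasurableSet (measure_ne_top _ _),
      hofReal, hPr, ENNReal.ofReal_sub _ hSr0]
  have hPEne : P E ≠ 0 := by
    rw [hPE]
    simp only [ne_eq, ENNReal.ofReal_eq_zero, not_le]
    linarith
  have hPEnetop : P E ≠ ⊤ := measure_ne_top _ _
  have hmeasST : Measurable (fun ω => S (T ω)) := hScont.measurable.comp hT
  -- the key interval computation
  have hnum : ∀ x : ℝ, Sr ≤ x → x < S l →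
      P (E ∩ {ω | S (T ω) ≤ x}) = ENNReal.ofReal (x - Sr) := by
    intro x hx1 hx2
    by_cases hne : ∃ t : ℝ, S t ≤ x
    · set t₀ := sInf {t : ℝ | S t ≤ x} with ht₀
      have hclosed : IsClosed {t : ℝ | S t ≤ x} := isClosed_le hScont continuous_const
      have hbdd : BddBelow {t : ℝ | S t ≤ x} := by
        refine ⟨l, fun t ht => ?_⟩
        by_contra hc
        push_neg at hc
        exact absurd (lt_of_le_of_lt ht hx2) (not_lt.mpr (hanti hc.le))
      have ht₀mem : t₀ ∈ {t : ℝ | S t ≤ x} := hclosed.csInf_mem hne hbdd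
      have ht₀le : S t₀ ≤ x := ht₀mem
      have ht₀ge : x ≤ S t₀ := by
        -- for t < t₀, S t > x, pass to the limit
        have hev : ∀ᶠ t in 𝓝[<] t₀, x ≤ S t := by
          filter_upwards [self_mem_nhdsWithin] with t ht
          by_contra hc
          push_neg at hc
          exact absurd (csInf_le hbdd hc.le) (not_le.mpr ht)
        exact ge_of_tendsto ((hScont.tendsto t₀).mono_left nhdsWithin_le_nhds) hev
      have ht₀eq : S t₀ = x := le_antisymm ht₀le ht₀ge
      have hlt₀ : l < t₀ := by
        by_contra hc
        push_neg at hc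
        exact absurd (le_trans (hanti hc) ht₀le) (not_le.mpr hx2)
      have ht₀r : (t₀ : EReal) ≤ r := by
        rcases eq_or_ne r ⊤ with hr | hr
        · rw [hr]; exact le_top
        · have hrreal : ∃ r₀ : ℝ, r = (r₀ : EReal) := by
            lift r to ℝ using ⟨hr, ne_bot_of_gt hlr⟩ with r₀
            exact ⟨r₀, rfl⟩
          obtain ⟨r₀, hr₀⟩ := hrreal
          have : S r₀ = Sr := by
            rw [hS, hSr, hr₀]
            congr 1
            apply congrArg
            ext ω
            simp [EReal.coe_lt_coe_iff]
          have hr₀mem : r₀ ∈ {t : ℝ | S t ≤ x} := by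
            simp only [mem_setOf_eq, this]
            exact hx1
          rw [hr₀]
          exact_mod_cast csInf_le hbdd hr₀mem
      -- identify the event
      have hset : E ∩ {ω | S (T ω) ≤ x} = {ω | t₀ ≤ T ω} \ {ω | r < (T ω : EReal)} := by
        ext ω
        simp only [hEdef, mem_inter_iff, mem_setOf_eq, mem_diff, not_lt]
        constructor
        · rintro ⟨⟨hlω, hrω⟩, hval⟩
          refine ⟨?_, hrω⟩
          by_contra hc
          push_neg at hc
          exact absurd (csInf_le hbdd hval) (not_le.mpr hc)
        · rintro ⟨ht, hrω⟩
          refine ⟨⟨lt_of_lt_of_le hlt₀ ht, hrω⟩, ?_⟩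
          calc S (T ω) ≤ S t₀ := hanti ht
            _ = x := ht₀eq
      have hsubr' : {ω | r < (T ω : EReal)} ⊆ {ω | t₀ ≤ T ω} := by
        intro ω hω
        simp only [mem_setOf_eq] at hω ⊢
        have : (t₀ : EReal) < (T ω : EReal) := lt_of_le_of_lt ht₀r hω
        exact_mod_cast this.le
      rw [hset, measure_diff hsubr' hmr.nullMeasurableSet (measure_ne_top _ _),
        hIci, hofReal, hPr, ht₀eq, ENNReal.ofReal_sub _ hSr0]
    · -- no `t` with `S t ≤ x`: then the event is empty and `x = Sr = 0`
      push_neg at hne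
      have hEmpty : E ∩ {ω | S (T ω) ≤ x} = ∅ := by
        ext ω
        simp only [mem_inter_iff, mem_setOf_eq, mem_empty_iff_false, iff_false, not_and]
        intro _
        exact not_le.mpr (hne (T ω))
      have hx0 : x ≤ 0 := by
        by_contra hc
        push_neg at hc
        obtain ⟨t, ht⟩ := surv_exists_le P T hT S hS hScont hc hpos
        exact absurd ht (not_le.mpr (hne t))
      have hxSr : x = Sr := le_antisymm (le_trans hx0 hSr0) hx1
      rw [hEmpty, measure_empty, hxSr, sub_self, ENNReal.ofReal_zero]
  -- now prove the measure equality via Iic sets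
  haveI : IsProbabilityMeasure (P[|E]) := cond_isProbabilityMeasure hPEne
  haveI : IsFiniteMeasure (Measure.map (fun ω => S (T ω)) (P[|E])) :=
    Measure.isFiniteMeasure_map _ _
  refine Measure.ext_of_Iic _ _ fun x => ?_
  rw [Measure.map_apply hmeasST measurableSet_Iic, cond_apply hmE,
    Measure.smul_apply, Measure.restrict_apply measurableSet_Iic]
  have hpre : (fun ω => S (T ω)) ⁻¹' Iic x = {ω | S (T ω) ≤ x} := rfl
  rw [hpre]
  rcases lt_or_ge x Sr with hcase | hcase
  · -- x < Sr : both sides vanish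
    have h1 : E ∩ {ω | S (T ω) ≤ x} = ∅ := by
      ext ω
      simp only [hEdef, mem_inter_iff, mem_setOf_eq, mem_empty_iff_false, iff_false, not_and]
      rintro ⟨hlω, hrω⟩
      exact not_le.mpr (lt_of_lt_of_le hcase (hSrle _ hrω))
    have h2 : Iic x ∩ Ico Sr (S l) = ∅ := by
      apply eq_empty_of_forall_notMem
      rintro t ⟨ht, h1, -⟩
      exact absurd (le_trans h1 ht) (not_le.mpr hcase)
    rw [h1, h2]
    simp
  · rcases lt_or_ge x (S l) with hcase2 | hcase2
    · -- Sr ≤ x < S l : the generic case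
      have h2 : Iic x ∩ Ico Sr (S l) = Icc Sr x := by
        ext t
        simp only [mem_inter_iff, mem_Iic, mem_Ico, mem_Icc]
        constructor
        · rintro ⟨h1, h2, h3⟩; exact ⟨h2, h1⟩
        · rintro ⟨h1, h2⟩; exact ⟨h2, h1, lt_of_le_of_lt h2 hcase2⟩
      rw [hnum x hcase hcase2, h2, Real.volume_Icc, hPE, smul_eq_mul]
    · -- x ≥ S l : both sides are 1
      have h1 : E ∩ {ω | S (T ω) ≤ x} = E := by
        apply inter_eq_left.mpr
        intro ω hω
        simp only [hEdef, mem_setOf_eq] at hω ⊢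
        exact le_trans (hanti hω.1.le) hcase2
      have h2 : Iic x ∩ Ico Sr (S l) = Ico Sr (S l) := by
        apply inter_eq_right.mpr
        intro t ht
        exact le_trans ht.2.le hcase2
      rw [h1, h2, Real.volume_Ico, hPE]
      rw [ENNReal.inv_mul_cancel, smul_eq_mul, ENNReal.inv_mul_cancel]
      · simpa [sub_pos] using (by linarith : (0:ℝ) < S l - Sr)
      · exact ENNReal.ofReal_ne_top
      · rw [← hPE]; exact hPEne
      · exact ENNReal.ofReal_ne_top
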